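/- The axiom system CLC (coalition logic with individual and common knowledge) is sound with respect to epistemic coalition models: every formula derivable in CLC is valid in all epistemic coalition models. -/

import Mathlib

/-- Formulas of CLC: coalition logic with individual knowledge `Kᵢ` and common knowledge
`C_G` operators. Coalitions are finite sets of agents. -/
inductive CLCForm (N : Type) [Fintype N] [DecidableEq N] : Type
  | atom : ℕ → CLCForm N
  | bot : CLCForm N
  | imp : CLCForm N → CLCForm N → CLCForm N
  | and : CLCForm N → CLCForm N → CLCForm N
  | coal : Finset N → CLCForm N → CLCForm N
  | know : N → CLCForm N → CLCForm N
  | common : Finset N → CLCForm N → CLCForm N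

namespace CLCForm

variable {N : Type} [Fintype N] [DecidableEq N]

def neg (φ : CLCForm N) : CLCForm N := imp φ bot
def top : CLCForm N := neg bot
def iff (φ ψ : CLCForm N) : CLCForm N := and (imp φ ψ) (imp ψ φ)

/-- `E_G φ`: everybody in `G` knows `φ`, i.e. the conjunction `⋀_{i ∈ G} Kᵢ φ`. -/
noncomputable def ev (G : Finset N) (φ : CLCForm N) : CLCForm N :=
  (G.toList.map (fun i => know i φ)).foldr and top

/-- Propositional evaluation treating modal formulas as atoms. -/
def propEval (v : CLCForm N → Bool) : CLCForm N → Bool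
  | atom n => v (atom n)
  | bot => false
  | imp φ ψ => !(propEval v φ) || propEval v ψ
  | and φ ψ => propEval v φ && propEval v ψ
  | coal G φ => v (coal G φ)
  | know i φ => v (know i φ)
  | common G φ => v (common G φ)

/-- The axiom system CLC: CL axioms G1–G5 with MP and RG, S5 axioms K, T, 4, 5 with
necessitation RN for each `Kᵢ`, the fixpoint axiom C2 and the induction rule RC for
common knowledge (C1 `E_G φ ↔ ⋀_{i∈G} Kᵢ φ` holds by definition of `E_G`). -/
inductive Prov : CLCForm N → Prop
  | taut (φ : CLCForm N) : (∀ v, propEval v φ = true) → Prov φ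
  | g1 (G : Finset N) : Prov (neg (coal G bot))
  | g2 (G : Finset N) : Prov (coal G top)
  | g3 (φ : CLCForm N) : Prov (imp (neg (coal ∅ (neg φ))) (coal Finset.univ φ))
  | g4 (G : Finset N) (φ ψ : CLCForm N) : Prov (imp (coal G (and φ ψ)) (coal G ψ))
  | g5 (G₁ G₂ : Finset N) (φ ψ : CLCForm N) : G₁ ∩ G₂ = ∅ →
      Prov (imp (and (coal G₁ φ) (coal G₂ ψ)) (coal (G₁ ∪ G₂) (and φ ψ)))
  | mp (φ ψ : CLCForm N) : Prov (imp φ ψ) → Prov φ → Prov ψ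
  | rg (G : Finset N) (φ ψ : CLCForm N) : Prov (iff φ ψ) →
      Prov (iff (coal G φ) (coal G ψ))
  | axK (i : N) (φ ψ : CLCForm N) :
      Prov (imp (know i (imp φ ψ)) (imp (know i φ) (know i ψ)))
  | axT (i : N) (φ : CLCForm N) : Prov (imp (know i φ) φ)
  | ax4 (i : N) (φ : CLCForm N) : Prov (imp (know i φ) (know i (know i φ)))
  | ax5 (i : N) (φ : CLCForm N) :
      Prov (imp (neg (know i φ)) (know i (neg (know i φ))))
  | rn (i : N) (φ : CLCForm N) : Prov φ → Prov (know i φ)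
  | c2 (G : Finset N) (φ : CLCForm N) :
      Prov (imp (common G φ) (ev G (and φ (common G φ))))
  | rc (G : Finset N) (φ ψ : CLCForm N) : Prov (imp φ (ev G (and φ ψ))) →
      Prov (imp φ (common G ψ))

end CLCForm

/-- Epistemic coalition models: a truly playable effectivity function at each state (E1–E6),
an epistemic equivalence relation for each agent, and a valuation. -/
structure CLCModel (N : Type) [Fintype N] [DecidableEq N] (S : Type) where
  eff : S → Finset N → Set (Set S)
  rel : N → S → S → Prop
  val : ℕ → Set S
  equiv : ∀ i, Equivalence (rel i)
  e1 : ∀ (s : S) (G : Finset N), (∅ : Set S) ∉ eff s G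
  e2 : ∀ (s : S) (G : Finset N), (Set.univ : Set S) ∈ eff s G
  e3 : ∀ (s : S) (X : Set S), Xᶜ ∉ eff s ∅ → X ∈ eff s Finset.univ
  e4 : ∀ (s : S) (G : Finset N) (X Y : Set S), X ∈ eff s G → X ⊆ Y → Y ∈ eff s G
  e5 : ∀ (s : S) (G₁ G₂ : Finset N) (X Y : Set S), G₁ ∩ G₂ = ∅ →
    X ∈ eff s G₁ → Y ∈ eff s G₂ → X ∩ Y ∈ eff s (G₁ ∪ G₂)
  e6 : ∀ s : S, {X | X ∈ eff s ∅ ∧ ¬ ∃ Y ∈ eff s ∅, Y ⊂ X}.Nonempty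

/-- Truth of a CLC formula at a state of an epistemic coalition model. Common knowledge is
interpreted via the transitive closure of the union of the accessibility relations. -/
def CLCSat {N : Type} [Fintype N] [DecidableEq N] {S : Type} (M : CLCModel N S) :
    S → CLCForm N → Prop
  | s, .atom n => s ∈ M.val n
  | _, .bot => False
  | s, .imp φ ψ => CLCSat M s φ → CLCSat M s ψ
  | s, .and φ ψ => CLCSat M s φ ∧ CLCSat M s ψ
  | s, .coal G φ => {t | CLCSat M t φ} ∈ M.eff s G
  | s, .know i φ => ∀ t, M.rel i s t → CLCSat M t φ
  | s, .common G φ =>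
      ∀ t, Relation.TransGen (fun a b => ∃ i ∈ G, M.rel i a b) s t → CLCSat M t φ


open Classical in
lemma CLCSat_propEval {N : Type} [Fintype N] [DecidableEq N] {S : Type}
    (M : CLCModel N S) (s : S) (φ : CLCForm N) :
    CLCForm.propEval (fun ψ => decide (CLCSat M s ψ)) φ = true ↔ CLCSat M s φ := by
  induction φ with
  | atom n => simp [CLCForm.propEval]
  | bot => simp [CLCForm.propEval, CLCSat]
  | imp φ ψ ihφ ihψ =>
      simp only [CLCForm.propEval, CLCSat, Bool.or_eq_true, Bool.not_eq_true',
        ← ihφ, ← ihψ]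
      cases h : CLCForm.propEval (fun ψ => decide (CLCSat M s ψ)) φ <;> simp [h]
  | and φ ψ ihφ ihψ => simp [CLCForm.propEval, CLCSat, ihφ, ihψ]
  | coal G φ _ => simp [CLCForm.propEval]
  | know i φ _ => simp [CLCForm.propEval]
  | common G φ _ => simp [CLCForm.propEval]

lemma CLCSat_ev {N : Type} [Fintype N] [DecidableEq N] {S : Type}
    (M : CLCModel N S) (s : S) (G : Finset N) (φ : CLCForm N) :
    CLCSat M s (CLCForm.ev G φ) ↔ ∀ i ∈ G, ∀ t, M.rel i s t → CLCSat M t φ := by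
  unfold CLCForm.ev
  have key : ∀ l : List N, CLCSat M s ((l.map (fun i => CLCForm.know i φ)).foldr
      CLCForm.and CLCForm.top) ↔ ∀ i ∈ l, ∀ t, M.rel i s t → CLCSat M t φ := by
    intro l
    induction l with
    | nil => simp [CLCSat, CLCForm.top, CLCForm.neg]
    | cons a l ih => simp [CLCSat, ih]
  rw [key]
  simp [Finset.mem_toList]

/-- Soundness of CLC: every formula derivable in the axiom system CLC is valid in all
epistemic coalition models. -/
theorem CLC_soundness {N : Type} [Fintype N] [DecidableEq N] (φ : CLCForm N)
    (h : CLCForm.Prov φ) :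
    ∀ (S : Type) (_ : Nonempty S) (M : CLCModel N S) (s : S), CLCSat M s φ := by
  induction h with
  | taut φ hv =>
      intro S _ M s
      exact (CLCSat_propEval M s φ).1 (hv _)
  | g1 G =>
      intro S _ M s
      intro h
      have : ({t | CLCSat M t CLCForm.bot} : Set S) = ∅ := by
        ext t; simp [CLCSat]
      have h' : ({t | CLCSat M t CLCForm.bot} : Set S) ∈ M.eff s G := h
      rw [this] at h'
      exact M.e1 s G h'
  | g2 G =>
      intro S _ M s
      show ({t | CLCSat M t CLCForm.top} : Set S) ∈ M.eff s G
      have : ({t | CLCSat M t CLCForm.top} : Set S) = Set.univ := by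
        ext t; simp [CLCSat, CLCForm.top, CLCForm.neg]
      rw [this]
      exact M.e2 s G
  | g3 φ =>
      intro S _ M s h
      have : ({t | CLCSat M t (CLCForm.neg φ)} : Set S) = {t | CLCSat M t φ}ᶜ := by
        ext t; simp [CLCSat, CLCForm.neg]
      apply M.e3
      rw [← this]
      exact h
  | g4 G φ ψ =>
      intro S _ M s h
      exact M.e4 s G _ _ h (fun t ht => ht.2)
  | g5 G₁ G₂ φ ψ hdisj =>
      intro S _ M s h
      have := M.e5 s G₁ G₂ _ _ hdisj h.1 h.2
      apply M.e4 s _ _ _ this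
      intro t ht; exact ⟨ht.1, ht.2⟩
  | mp φ ψ _ _ ih1 ih2 =>
      intro S hS M s
      exact ih1 S hS M s (ih2 S hS M s)
  | rg G φ ψ _ ih =>
      intro S hS M s
      have heq : ({t | CLCSat M t φ} : Set S) = {t | CLCSat M t ψ} := by
        ext t
        exact ⟨(ih S hS M t).1, (ih S hS M t).2⟩
      constructor <;> intro h
      · show ({t | CLCSat M t ψ} : Set S) ∈ M.eff s G; rw [← heq]; exact h
      · show ({t | CLCSat M t φ} : Set S) ∈ M.eff s G; rw [heq]; exact h
  | axK i φ ψ =>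
      intro S _ M s h1 h2 t ht
      exact h1 t ht (h2 t ht)
  | axT i φ =>
      intro S _ M s h
      exact h s ((M.equiv i).refl s)
  | ax4 i φ =>
      intro S _ M s h t ht u hu
      exact h u ((M.equiv i).trans ht hu)
  | ax5 i φ =>
      intro S _ M s h t ht hk
      apply h
      intro u hu
      exact hk u ((M.equiv i).trans ((M.equiv i).symm ht) hu)
  | rn i φ _ ih =>
      intro S hS M s t _
      exact ih S hS M t
  | c2 G φ =>
      intro S _ M s h
      rw [CLCSat_ev]
      intro i hi t ht
      refine ⟨h t (Relation.TransGen.single ⟨i, hi, ht⟩), ?_⟩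
      intro u hu
      exact h u (Relation.TransGen.head ⟨i, hi, ht⟩ hu)
  | rc G φ ψ _ ih =>
      intro S hS M s hφ t htrans
      have key : ∀ t, Relation.TransGen (fun a b => ∃ i ∈ G, M.rel i a b) s t →
          CLCSat M t φ ∧ CLCSat M t ψ := by
        intro t ht
        induction ht with
        | single hstep =>
            obtain ⟨i, hi, hr⟩ := hstep
            exact (CLCSat_ev M s G _).1 (ih S hS M s hφ) i hi _ hr
        | tail _ hstep ih2 =>
            obtain ⟨i, hi, hr⟩ := hstep
            exact (CLCSat_ev M _ G _).1 (ih S hS M _ ih2.1) i hi _ hr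
      exact (key t htrans).2
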